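/- There exists Δ₀>0 such that for every Δ>Δ₀, every ray of the form {c·v : c>0} with v∈ℝ²∖{0} intersects the contour L in exactly one point. -/

import Mathlib

noncomputable section

/-- The quadratic form `e(y₂,y₃) = a·y₂² + b·(y₂−y₃)²` defining the ellipse. -/
def eF (a b : ℝ) (y : ℝ × ℝ) : ℝ := a * y.1 ^ 2 + b * (y.1 - y.2) ^ 2

/-- The gradient of `eF`. -/
def gradE (a b : ℝ) (y : ℝ × ℝ) : ℝ × ℝ :=
  (2 * a * y.1 + 2 * b * (y.1 - y.2), -(2 * b * (y.1 - y.2)))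

/-- Euclidean inner product on `ℝ × ℝ`. -/
def dotp (u v : ℝ × ℝ) : ℝ := u.1 * v.1 + u.2 * v.2

/-- Euclidean norm on `ℝ × ℝ`. -/
def enorm2 (v : ℝ × ℝ) : ℝ := Real.sqrt (v.1 ^ 2 + v.2 ^ 2)

/-- `T` is a point of the ellipse in the open quadrant `{y₂<0, y₃<0}` where the
gradient of `e` is a positive multiple of `(−Δ, 1)`. -/
def IsT3 (a b Δ : ℝ) (T : ℝ × ℝ) : Prop :=
  eF a b T = 1 ∧ T.1 < 0 ∧ T.2 < 0 ∧ ∃ c > 0, gradE a b T = c • ((-Δ, 1) : ℝ × ℝ)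

/-- `T` is a point of the ellipse with `y₃ < 0` where the gradient of `e`
is a positive multiple of `(1, −Δ)`. -/
def IsT2 (a b Δ : ℝ) (T : ℝ × ℝ) : Prop :=
  eF a b T = 1 ∧ T.2 < 0 ∧ ∃ c > 0, gradE a b T = c • ((1, -Δ) : ℝ × ℝ)

/-- The configuration of the tangency points `T₂, T₃` and of the intercepts
`K₂ = (u₂,0)`, `K₃ = (0,u₃)` of the corresponding tangent lines with the axes. -/
def GoodConfig (a b Δ u₂ u₃ : ℝ) (T₂ T₃ : ℝ × ℝ) : Prop :=
  IsT2 a b Δ T₂ ∧ IsT3 a b Δ T₃ ∧ 0 < u₂ ∧ 0 < u₃ ∧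
  dotp (gradE a b T₂) (((u₂, 0) : ℝ × ℝ) - T₂) = 0 ∧
  dotp (gradE a b T₃) (((0, u₃) : ℝ × ℝ) - T₃) = 0

/-- The closed arc of the ellipse from `T₂` to `T₃` passing through
`(−a^{−1/2}, −a^{−1/2})`: the points of the ellipse whose outward normal direction
lies in the closed convex cone spanned by `(1, −Δ)` (normal at `T₂`) and
`(−Δ, 1)` (normal at `T₃`). -/
def arcE (a b Δ : ℝ) : Set (ℝ × ℝ) :=
  {y | eF a b y = 1 ∧ ∃ c₂ c₃ : ℝ, 0 ≤ c₂ ∧ 0 ≤ c₃ ∧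
    gradE a b y = c₂ • ((1, -Δ) : ℝ × ℝ) + c₃ • ((-Δ, 1) : ℝ × ℝ)}

/-- The closed contour `L`: segment `K₃K₂`, segment `K₂T₂`, the arc of the ellipse
from `T₂` to `T₃` through `(−a^{−1/2},−a^{−1/2})`, and segment `T₃K₃`. -/
def contourL (a b Δ u₂ u₃ : ℝ) (T₂ T₃ : ℝ × ℝ) : Set (ℝ × ℝ) :=
  segment ℝ ((0, u₃) : ℝ × ℝ) ((u₂, 0) : ℝ × ℝ) ∪
    segment ℝ ((u₂, 0) : ℝ × ℝ) T₂ ∪ arcE a b Δ ∪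
    segment ℝ T₃ ((0, u₃) : ℝ × ℝ)

/-- `φ` is the homogeneous functional associated with the contour `L`:
`φ(0) = 0` and, for `y ≠ 0`, `φ(y)` is positive with `y/φ(y) ∈ L`. -/
def IsPhi (L : Set (ℝ × ℝ)) (φ : ℝ × ℝ → ℝ) : Prop :=
  φ 0 = 0 ∧ ∀ y : ℝ × ℝ, y ≠ 0 → 0 < φ y ∧ (φ y)⁻¹ • y ∈ L

/-- `n` is the outward unit normal field of the contour `L` (defined except at
`K₂` and `K₃`): on the elliptic arc it is `∇e(y)/‖∇e(y)‖`, and it is constant on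
each of the three straight pieces, equal to `n(T₂)` on `(K₂,T₂]`, to `n(T₃)` on
`[T₃,K₃)`, and to the normalized `(u₂⁻¹, u₃⁻¹)` on `(K₃,K₂)`. -/
def IsN (a b Δ u₂ u₃ : ℝ) (T₂ T₃ : ℝ × ℝ) (n : ℝ × ℝ → ℝ × ℝ) : Prop :=
  (∀ y ∈ arcE a b Δ, n y = (enorm2 (gradE a b y))⁻¹ • gradE a b y) ∧
  (∀ y ∈ segment ℝ ((u₂, 0) : ℝ × ℝ) T₂, y ≠ ((u₂, 0) : ℝ × ℝ) → n y = n T₂) ∧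
  (∀ y ∈ segment ℝ T₃ ((0, u₃) : ℝ × ℝ), y ≠ ((0, u₃) : ℝ × ℝ) → n y = n T₃) ∧
  (∀ y ∈ segment ℝ ((0, u₃) : ℝ × ℝ) ((u₂, 0) : ℝ × ℝ),
    y ≠ ((0, u₃) : ℝ × ℝ) → y ≠ ((u₂, 0) : ℝ × ℝ) →
    n y = (enorm2 ((u₂⁻¹, u₃⁻¹) : ℝ × ℝ))⁻¹ • ((u₂⁻¹, u₃⁻¹) : ℝ × ℝ))


set_option maxHeartbeats 1000000

namespace Stmt2Aux

/-- 2×2 determinant. -/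
def det2 (u v : ℝ × ℝ) : ℝ := u.1 * v.2 - u.2 * v.1

/-- closed convex cone spanned by two vectors -/
def cone (P Q v : ℝ × ℝ) : Prop := ∃ α β : ℝ, 0 ≤ α ∧ 0 ≤ β ∧ v = α • P + β • Q

lemma smul_fst (c : ℝ) (p : ℝ × ℝ) : (c • p).1 = c * p.1 := rfl
lemma smul_snd (c : ℝ) (p : ℝ × ℝ) : (c • p).2 = c * p.2 := rfl
lemma add_fst (p q : ℝ × ℝ) : (p + q).1 = p.1 + q.1 := rfl
lemma add_snd (p q : ℝ × ℝ) : (p + q).2 = p.2 + q.2 := rfl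

lemma det2_swap (u v : ℝ × ℝ) : det2 u v = - det2 v u := by unfold det2; ring

lemma det2_combo (P Q : ℝ × ℝ) (x y s t : ℝ) :
    det2 (x • P + y • Q) (s • P + t • Q) = (x * t - y * s) * det2 P Q := by
  simp only [det2, smul_fst, smul_snd, add_fst, add_snd]; ring

lemma det2_smul_right (P : ℝ × ℝ) (t : ℝ) (v : ℝ × ℝ) :
    det2 P (t • v) = t * det2 P v := by
  simp only [det2, smul_fst, smul_snd]; ring

lemma basis_repr {P Q : ℝ × ℝ} (h : det2 P Q ≠ 0) (v : ℝ × ℝ) :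
    v = (det2 v Q / det2 P Q) • P + (det2 P v / det2 P Q) • Q := by
  apply Prod.ext <;>
  · simp only [det2, smul_fst, smul_snd, add_fst, add_snd] at *
    rw [div_mul_eq_mul_div, div_mul_eq_mul_div, ← add_div, eq_div_iff h]
    ring

lemma indep_coeffs {P Q : ℝ × ℝ} (h : det2 P Q ≠ 0) {x y : ℝ}
    (hv : x • P + y • Q = 0) : x = 0 ∧ y = 0 := by
  have h1 : x * P.1 + y * Q.1 = 0 := by
    have := congrArg Prod.fst hv; simpa [smul_fst, add_fst] using this
  have h2 : x * P.2 + y * Q.2 = 0 := by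
    have := congrArg Prod.snd hv; simpa [smul_snd, add_snd] using this
  unfold det2 at h
  constructor
  · by_contra hx
    apply h
    have : x * (P.1 * Q.2 - P.2 * Q.1) = 0 := by linear_combination Q.2 * h1 - Q.1 * h2
    rcases mul_eq_zero.1 this with h' | h'
    · exact absurd h' hx
    · exact h'
  · by_contra hy
    apply h
    have : y * (P.1 * Q.2 - P.2 * Q.1) = 0 := by linear_combination -P.2 * h1 + P.1 * h2
    rcases mul_eq_zero.1 this with h' | h'
    · exact absurd h' hy
    · exact h'

lemma cone_iff {P Q : ℝ × ℝ} (h : det2 P Q < 0) (v : ℝ × ℝ) :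
    cone P Q v ↔ det2 P v ≤ 0 ∧ 0 ≤ det2 Q v := by
  constructor
  · rintro ⟨x, y, hx, hy, rfl⟩
    constructor
    · have : det2 P (x • P + y • Q) = y * det2 P Q := by
        have := det2_combo P Q 1 0 x y
        simpa using this
      rw [this]; exact mul_nonpos_of_nonneg_of_nonpos hy h.le
    · have : det2 Q (x • P + y • Q) = -x * det2 P Q := by
        have := det2_combo P Q 0 1 x y
        simpa using this
      rw [this]
      have := mul_nonneg hx (neg_nonneg.2 h.le)
      nlinarith
  · rintro ⟨h1, h2⟩
    refine ⟨det2 v Q / det2 P Q, det2 P v / det2 P Q, ?_, ?_, basis_repr h.ne v⟩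
    · rw [det2_swap v Q]
      exact div_nonneg_of_nonpos (by linarith) h.le
    · exact div_nonneg_of_nonpos h1 h.le

lemma key1 {α β γ δ x y : ℝ} (hα : α < 0) (hδ : δ < 0) (hd : β * γ < α * δ)
    (hx : 0 < x) (hy : y < 0) (h3 : α * y < β * x) (h4 : γ * y < δ * x) : False := by
  have hβx : 0 < β * x := lt_trans (mul_pos_of_neg_of_neg hα hy) h3
  have hδx : δ * x < 0 := mul_neg_of_neg_of_pos hδ hx
  have hγy : γ * y < 0 := lt_trans h4 hδx
  -- αyδx > βxδx ; βxγy < βxδx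
  nlinarith [mul_lt_mul_of_neg_right h3 hδx, mul_lt_mul_of_pos_left h4 hβx,
    mul_lt_mul_of_pos_right hd (mul_pos hx (neg_pos.2 hy))]

lemma key2 {α β γ δ x y : ℝ} (hα : α < 0) (hδ : δ < 0) (hd : β * γ < α * δ)
    (hx : 0 ≤ x) (hy : 0 ≤ y) (h3 : β * x ≤ α * y) (h4 : γ * y ≤ δ * x) :
    x = 0 ∧ y = 0 := by
  have hαy : α * y ≤ 0 := mul_nonpos_of_nonpos_of_nonneg hα.le hy
  have hδx : δ * x ≤ 0 := mul_nonpos_of_nonpos_of_nonneg hδ.le hx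
  rcases eq_or_lt_of_le hy with hy0 | hy0
  · -- y = 0
    have hy0 : y = 0 := hy0.symm
    subst hy0
    have h4' : 0 ≤ δ * x := by simpa using h4
    have hx0 : x = 0 := by nlinarith
    exact ⟨hx0, rfl⟩
  · -- y > 0
    exfalso
    have hαy' : α * y < 0 := mul_neg_of_neg_of_pos hα hy0
    have hβx : β * x < 0 := lt_of_le_of_lt h3 hαy'
    have hx0 : 0 < x := by
      rcases eq_or_lt_of_le hx with h | h
      · exfalso; rw [← h] at hβx; simp at hβx
      · exact h
    have hδx' : δ * x < 0 := mul_neg_of_neg_of_pos hδ hx0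
    have hγy : γ * y < 0 := lt_of_le_of_lt h4 hδx'
    nlinarith [mul_le_mul_of_nonpos_right h3 hγy.le, mul_le_mul_of_nonpos_right h4 hαy'.le,
      mul_lt_mul_of_pos_right hd (mul_pos hx0 hy0)]

/-- Covering lemma: four vectors with negative cyclic determinants span the plane
by their consecutive cones. -/
lemma covering {P₁ P₂ P₃ P₄ : ℝ × ℝ}
    (h12 : det2 P₁ P₂ < 0) (h23 : det2 P₂ P₃ < 0)
    (h34 : det2 P₃ P₄ < 0) (h41 : det2 P₄ P₁ < 0)
    (v : ℝ × ℝ) (hv : v ≠ 0) :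
    cone P₁ P₂ v ∨ cone P₂ P₃ v ∨ cone P₃ P₄ v ∨ cone P₄ P₁ v := by
  set D := det2 P₁ P₂ with hD
  have hDne : D ≠ 0 := h12.ne
  set α := det2 P₃ P₂ / D with hα_def
  set β := det2 P₁ P₃ / D with hβ_def
  set γ := det2 P₄ P₂ / D with hγ_def
  set δ := det2 P₁ P₄ / D with hδ_def
  have hP3 : P₃ = α • P₁ + β • P₂ := basis_repr hDne P₃
  have hP4 : P₄ = γ • P₁ + δ • P₂ := basis_repr hDne P₄
  have hαneg : α < 0 := by
    have : 0 < det2 P₃ P₂ := by rw [det2_swap]; linarith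
    exact div_neg_of_pos_of_neg this h12
  have hδneg : δ < 0 := by
    have : 0 < det2 P₁ P₄ := by rw [det2_swap]; linarith
    exact div_neg_of_pos_of_neg this h12
  have hαδβγ : β * γ < α * δ := by
    have h34' : det2 P₃ P₄ = (α * δ - β * γ) * D := by
      rw [hP3, hP4]; exact det2_combo _ _ _ _ _ _
    nlinarith [h34, h12]
  set x := det2 v P₂ / D with hx_def
  set y := det2 P₁ v / D with hy_def
  have hvrep : v = x • P₁ + y • P₂ := basis_repr hDne v
  have hf1 : det2 P₁ v = y * D := by
    rw [hvrep]
    have := det2_combo P₁ P₂ 1 0 x y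
    simpa using this
  have hf2 : det2 P₂ v = -x * D := by
    rw [hvrep]
    have := det2_combo P₁ P₂ 0 1 x y
    simpa using this
  have hf3 : det2 P₃ v = (α * y - β * x) * D := by
    rw [hvrep, hP3]; exact det2_combo _ _ _ _ _ _
  have hf4 : det2 P₄ v = (γ * y - δ * x) * D := by
    rw [hvrep, hP4]; exact det2_combo _ _ _ _ _ _
  have hxy : ¬ (x = 0 ∧ y = 0) := by
    rintro ⟨hx0, hy0⟩
    apply hv
    rw [hvrep, hx0, hy0]; simp
  -- not all four dets positive
  have hnotpos : ¬ (0 < det2 P₁ v ∧ 0 < det2 P₂ v ∧ 0 < det2 P₃ v ∧ 0 < det2 P₄ v) := by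
    rintro ⟨g1, g2, g3, g4⟩
    rw [hf1] at g1; rw [hf2] at g2; rw [hf3] at g3; rw [hf4] at g4
    have hy : y < 0 := by nlinarith
    have hx : 0 < x := by nlinarith
    have h3 : α * y < β * x := by nlinarith
    have h4 : γ * y < δ * x := by nlinarith
    exact key1 hαneg hδneg hαδβγ hx hy h3 h4
  have hnotneg : ¬ (det2 P₁ v < 0 ∧ det2 P₂ v < 0 ∧ det2 P₃ v < 0 ∧ det2 P₄ v < 0) := by
    rintro ⟨g1, g2, g3, g4⟩
    rw [hf1] at g1; rw [hf2] at g2; rw [hf3] at g3; rw [hf4] at g4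
    have hy : 0 < y := by nlinarith
    have hx : x < 0 := by nlinarith
    have h3 : α * (-y) < β * (-x) := by nlinarith
    have h4 : γ * (-y) < δ * (-x) := by nlinarith
    exact key1 hαneg hδneg hαδβγ (by linarith) (by linarith) h3 h4
  -- combinatorics
  rw [cone_iff h12, cone_iff h23, cone_iff h34, cone_iff h41]
  by_contra hc
  push_neg at hc
  obtain ⟨c1, c2, c3, c4⟩ := hc
  rcases le_or_gt (det2 P₁ v) 0 with h1 | h1
  · have g2 : det2 P₂ v < 0 := c1 h1
    have g3 : det2 P₃ v < 0 := c2 g2.le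
    have g4 : det2 P₄ v < 0 := c3 g3.le
    have g1 : det2 P₁ v < 0 := c4 g4.le
    exact hnotneg ⟨g1, g2, g3, g4⟩
  · have g4 : 0 < det2 P₄ v := by
      by_contra h
      push_neg at h
      exact absurd (c4 h) (not_lt.2 h1.le)
    have g3 : 0 < det2 P₃ v := by
      by_contra h
      push_neg at h
      exact absurd (c3 h) (not_lt.2 g4.le)
    have g2 : 0 < det2 P₂ v := by
      by_contra h
      push_neg at h
      exact absurd (c2 h) (not_lt.2 g3.le)
    exact hnotpos ⟨h1, g2, g3, g4⟩

lemma det2_eq_zero_collinear {Q v : ℝ × ℝ} (hQ : Q ≠ 0) (h : det2 Q v = 0) :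
    ∃ t : ℝ, v = t • Q := by
  unfold det2 at h
  by_cases h1 : Q.1 = 0
  · have h2 : Q.2 ≠ 0 := by
      intro h2; exact hQ (Prod.ext h1 h2)
    refine ⟨v.2 / Q.2, ?_⟩
    apply Prod.ext
    · rw [smul_fst]
      rw [h1] at h ⊢
      have hv1 : Q.2 * v.1 = 0 := by linarith
      rcases mul_eq_zero.1 hv1 with h' | h'
      · exact absurd h' h2
      · rw [h']; ring
    · rw [smul_snd]; field_simp
  · refine ⟨v.1 / Q.1, ?_⟩
    apply Prod.ext
    · rw [smul_fst]; field_simp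
    · rw [smul_snd]
      field_simp
      linarith [h]

/-- two adjacent cones intersect only along the shared ray -/
lemma adjacent {P Q R v : ℝ × ℝ} (hPQ : det2 P Q < 0) (hQR : det2 Q R < 0)
    (h1 : cone P Q v) (h2 : cone Q R v) (hv : v ≠ 0) :
    ∃ t : ℝ, 0 < t ∧ v = t • Q := by
  have hQ0 : Q ≠ 0 := by
    intro h; rw [h] at hPQ; simp [det2] at hPQ
  have e1 := (cone_iff hPQ v).1 h1
  have e2 := (cone_iff hQR v).1 h2
  have hz : det2 Q v = 0 := le_antisymm e2.1 e1.2
  obtain ⟨t, ht⟩ := det2_eq_zero_collinear hQ0 hz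
  refine ⟨t, ?_, ht⟩
  have : det2 P v = t * det2 P Q := by rw [ht, det2_smul_right]
  have htnn : 0 ≤ t := by nlinarith [e1.1]
  rcases eq_or_lt_of_le htnn with h0 | h0
  · exfalso; apply hv; rw [ht, ← h0]; simp
  · exact h0

/-- opposite cones intersect trivially -/
lemma opposite {P₁ P₂ P₃ P₄ v : ℝ × ℝ}
    (h12 : det2 P₁ P₂ < 0) (h23 : det2 P₂ P₃ < 0)
    (h34 : det2 P₃ P₄ < 0) (h41 : det2 P₄ P₁ < 0)
    (hc1 : cone P₁ P₂ v) (hc3 : cone P₃ P₄ v) : v = 0 := by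
  set D := det2 P₁ P₂ with hD
  have hDne : D ≠ 0 := h12.ne
  set α := det2 P₃ P₂ / D with hα_def
  set β := det2 P₁ P₃ / D with hβ_def
  set γ := det2 P₄ P₂ / D with hγ_def
  set δ := det2 P₁ P₄ / D with hδ_def
  have hP3 : P₃ = α • P₁ + β • P₂ := basis_repr hDne P₃
  have hP4 : P₄ = γ • P₁ + δ • P₂ := basis_repr hDne P₄
  have hαneg : α < 0 := by
    have : 0 < det2 P₃ P₂ := by rw [det2_swap]; linarith
    exact div_neg_of_pos_of_neg this h12
  have hδneg : δ < 0 := by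
    have : 0 < det2 P₁ P₄ := by rw [det2_swap]; linarith
    exact div_neg_of_pos_of_neg this h12
  have hαδβγ : β * γ < α * δ := by
    have h34' : det2 P₃ P₄ = (α * δ - β * γ) * D := by
      rw [hP3, hP4]; exact det2_combo _ _ _ _ _ _
    nlinarith [h34, h12]
  set x := det2 v P₂ / D with hx_def
  set y := det2 P₁ v / D with hy_def
  have hvrep : v = x • P₁ + y • P₂ := basis_repr hDne v
  have hf1 : det2 P₁ v = y * D := by
    rw [hvrep]
    have := det2_combo P₁ P₂ 1 0 x y
    simpa using this
  have hf2 : det2 P₂ v = -x * D := by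
    rw [hvrep]
    have := det2_combo P₁ P₂ 0 1 x y
    simpa using this
  have hf3 : det2 P₃ v = (α * y - β * x) * D := by
    rw [hvrep, hP3]; exact det2_combo _ _ _ _ _ _
  have hf4 : det2 P₄ v = (γ * y - δ * x) * D := by
    rw [hvrep, hP4]; exact det2_combo _ _ _ _ _ _
  have e1 := (cone_iff h12 v).1 hc1
  have e3 := (cone_iff h34 v).1 hc3
  have hy : 0 ≤ y := by nlinarith [e1.1, hf1]
  have hx : 0 ≤ x := by nlinarith [e1.2, hf2]
  have h3 : β * x ≤ α * y := by nlinarith [e3.1, hf3]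
  have h4 : γ * y ≤ δ * x := by nlinarith [e3.2, hf4]
  obtain ⟨hx0, hy0⟩ := key2 hαneg hδneg hαδβγ hx hy h3 h4
  rw [hvrep, hx0, hy0]; simp

/-- a ray meets a segment with linearly independent endpoints at most once -/
lemma seg_ray_unique {P Q v p p' : ℝ × ℝ} {c c' : ℝ} (hPQ : det2 P Q ≠ 0)
    (hp : p ∈ segment ℝ P Q) (hp' : p' ∈ segment ℝ P Q)
    (hc : 0 < c) (hc' : 0 < c') (h : p = c • v) (h' : p' = c' • v) : p = p' := by
  obtain ⟨s, t, hs, ht, hst, hpe⟩ := hp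
  obtain ⟨s', t', hs', ht', hst', hpe'⟩ := hp'
  -- c' • p = c • p'
  have hcc : c' • p = c • p' := by rw [h, h', smul_smul, smul_smul, mul_comm]
  have hzero : (c' * s - c * s') • P + (c' * t - c * t') • Q = 0 := by
    have : c' • (s • P + t • Q) = c • (s' • P + t' • Q) := by rw [hpe, hpe']; exact hcc
    have h2 := sub_eq_zero.2 this
    rw [smul_add, smul_add, smul_smul, smul_smul, smul_smul, smul_smul] at h2
    rw [sub_smul, sub_smul]
    abel_nf
    abel_nf at h2
    convert h2 using 2 <;> ring_nf
  obtain ⟨e1, e2⟩ := indep_coeffs hPQ hzero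
  have hcc' : c' = c := by nlinarith [e1, e2, hst, hst']
  rw [h, h', hcc']

/-- existence: if `v` lies in the cone of `P, Q`, the ray of `v` meets the segment -/
lemma seg_ray_exists {P Q v : ℝ × ℝ} (hcone : cone P Q v) (hv : v ≠ 0) :
    ∃ p ∈ segment ℝ P Q, ∃ c : ℝ, 0 < c ∧ p = c • v := by
  obtain ⟨x, y, hx, hy, hrep⟩ := hcone
  have hσ : 0 < x + y := by
    rcases lt_or_eq_of_le (add_nonneg hx hy) with h | h
    · exact h
    · exfalso; apply hv
      have hx0 : x = 0 := by linarith
      have hy0 : y = 0 := by linarith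
      rw [hrep, hx0, hy0]; simp
  refine ⟨(x + y)⁻¹ • v, ⟨x / (x + y), y / (x + y), div_nonneg hx hσ.le,
    div_nonneg hy hσ.le, by field_simp, ?_⟩, (x + y)⁻¹, inv_pos.2 hσ, rfl⟩
  rw [hrep, smul_add, smul_smul, smul_smul, div_eq_inv_mul, div_eq_inv_mul]

/-- converse: a ray point on the segment certifies cone membership -/
lemma seg_ray_cone {P Q v p : ℝ × ℝ} {c : ℝ} (hp : p ∈ segment ℝ P Q)
    (hc : 0 < c) (h : p = c • v) : cone P Q v := by
  obtain ⟨s, t, hs, ht, _, hpe⟩ := hp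
  refine ⟨s / c, t / c, div_nonneg hs hc.le, div_nonneg ht hc.le, ?_⟩
  have : v = c⁻¹ • p := by rw [h, smul_smul, inv_mul_cancel₀ hc.ne', one_smul]
  rw [this, ← hpe, smul_add, smul_smul, smul_smul, div_eq_inv_mul, div_eq_inv_mul]

section Arc
variable {a b Δ : ℝ}

lemma eF_smul (a b c : ℝ) (v : ℝ × ℝ) : eF a b (c • v) = c ^ 2 * eF a b v := by
  simp only [eF, smul_fst, smul_snd]; ring

lemma eF_pos (ha : 0 < a) (hb : 0 < b) {v : ℝ × ℝ} (hv : v ≠ 0) : 0 < eF a b v := by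
  have hnn : (0:ℝ) ≤ eF a b v := by
    unfold eF
    have := mul_nonneg ha.le (sq_nonneg v.1)
    have := mul_nonneg hb.le (sq_nonneg (v.1 - v.2))
    linarith
  rcases lt_or_eq_of_le hnn with h | h
  · exact h
  · exfalso
    apply hv
    have h' := h.symm
    unfold eF at h'
    have h1 : v.1 ^ 2 = 0 := by nlinarith [mul_nonneg hb.le (sq_nonneg (v.1 - v.2)), mul_nonneg ha.le (sq_nonneg v.1), sq_nonneg v.1]
    have hv1 : v.1 = 0 := by
      have := pow_eq_zero_iff (n := 2) (by norm_num) |>.1 h1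
      exact this
    have h2 : (v.1 - v.2) ^ 2 = 0 := by nlinarith [mul_nonneg hb.le (sq_nonneg (v.1 - v.2)), sq_nonneg (v.1 - v.2)]
    have hv2 : v.2 = 0 := by
      have := pow_eq_zero_iff (n := 2) (by norm_num) |>.1 h2
      linarith
    exact Prod.ext hv1 hv2

lemma gradE_smul (a b c : ℝ) (v : ℝ × ℝ) : gradE a b (c • v) = c • gradE a b v := by
  apply Prod.ext <;> (simp only [gradE, smul_fst, smul_snd]; ring)

lemma gradE_lin (a b x y : ℝ) (u w : ℝ × ℝ) :
    gradE a b (x • u + y • w) = x • gradE a b u + y • gradE a b w := by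
  apply Prod.ext <;>
    (simp only [gradE, smul_fst, smul_snd, add_fst, add_snd]; ring)

lemma gradE_inj (ha : 0 < a) (hb : 0 < b) {y y' : ℝ × ℝ}
    (h : gradE a b y = gradE a b y') : y = y' := by
  have h1 := congrArg Prod.fst h
  have h2 := congrArg Prod.snd h
  simp only [gradE] at h1 h2
  have e1 : y.1 = y'.1 := by nlinarith
  have e2 : y.2 = y'.2 := by nlinarith
  exact Prod.ext e1 e2

lemma arc_ray_unique {p p' v : ℝ × ℝ} {c c' : ℝ}
    (hp : eF a b p = 1) (hp' : eF a b p' = 1)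
    (hc : 0 < c) (hc' : 0 < c') (h : p = c • v) (h' : p' = c' • v) : p = p' := by
  have e1 : c ^ 2 * eF a b v = 1 := by rw [← eF_smul, ← h, hp]
  have e2 : c' ^ 2 * eF a b v = 1 := by rw [← eF_smul, ← h', hp']
  have hev : 0 < eF a b v := by nlinarith [sq_nonneg c]
  have : c = c' := by nlinarith
  rw [h, h', this]

lemma arc_ray_exists (ha : 0 < a) (hb : 0 < b) {T₂ T₃ v : ℝ × ℝ} {c₂ c₃ : ℝ}
    (hc₂ : 0 < c₂) (hc₃ : 0 < c₃)
    (hg₂ : gradE a b T₂ = c₂ • ((1, -Δ) : ℝ × ℝ))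
    (hg₃ : gradE a b T₃ = c₃ • ((-Δ, 1) : ℝ × ℝ))
    (hcone : cone T₂ T₃ v) (hv : v ≠ 0) :
    ∃ p ∈ arcE a b Δ, ∃ c : ℝ, 0 < c ∧ p = c • v := by
  obtain ⟨x, y, hx, hy, hrep⟩ := hcone
  have hev : 0 < eF a b v := eF_pos ha hb hv
  set c : ℝ := (Real.sqrt (eF a b v))⁻¹ with hc_def
  have hsqrt : 0 < Real.sqrt (eF a b v) := Real.sqrt_pos.2 hev
  have hcpos : 0 < c := inv_pos.2 hsqrt
  refine ⟨c • v, ⟨?_, ?_⟩, c, hcpos, rfl⟩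
  · rw [eF_smul]
    rw [hc_def]
    rw [inv_pow, Real.sq_sqrt hev.le]
    exact inv_mul_cancel₀ hev.ne'
  · refine ⟨c * (x * c₂), c * (y * c₃),
      mul_nonneg hcpos.le (mul_nonneg hx hc₂.le),
      mul_nonneg hcpos.le (mul_nonneg hy hc₃.le), ?_⟩
    rw [hrep, gradE_smul, gradE_lin, hg₂, hg₃]
    rw [smul_add, smul_smul, smul_smul, smul_smul, smul_smul]
    ring_nf

lemma arc_ray_cone (ha : 0 < a) (hb : 0 < b) {T₂ T₃ v p : ℝ × ℝ} {c₂ c₃ c : ℝ}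
    (hc₂ : 0 < c₂) (hc₃ : 0 < c₃)
    (hg₂ : gradE a b T₂ = c₂ • ((1, -Δ) : ℝ × ℝ))
    (hg₃ : gradE a b T₃ = c₃ • ((-Δ, 1) : ℝ × ℝ))
    (hp : p ∈ arcE a b Δ) (hc : 0 < c) (h : p = c • v) : cone T₂ T₃ v := by
  obtain ⟨hpe, d₂, d₃, hd₂, hd₃, hgrad⟩ := hp
  have hq : p = (d₂ / c₂) • T₂ + (d₃ / c₃) • T₃ := by
    apply gradE_inj ha hb
    rw [gradE_lin, hg₂, hg₃, smul_smul, smul_smul,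
      div_mul_cancel₀ _ hc₂.ne', div_mul_cancel₀ _ hc₃.ne', hgrad]
  have hvp : v = c⁻¹ • p := by rw [h, smul_smul, inv_mul_cancel₀ hc.ne', one_smul]
  refine ⟨c⁻¹ * (d₂ / c₂), c⁻¹ * (d₃ / c₃),
    mul_nonneg (inv_pos.2 hc).le (div_nonneg hd₂ hc₂.le),
    mul_nonneg (inv_pos.2 hc).le (div_nonneg hd₃ hc₃.le), ?_⟩
  rw [hvp, hq, smul_add, smul_smul, smul_smul]

end Arc

end Stmt2Aux

/-- for all sufficiently large `Δ`, every ray `{c·v : c > 0}` with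
`v ≠ 0` meets the contour `L` in exactly one point. -/
theorem stmt2 (a b : ℝ) (ha : 0 < a) (hb : 0 < b) :
    ∃ Δ₀ > (0 : ℝ), ∀ Δ > Δ₀, ∀ u₂ u₃ : ℝ, ∀ T₂ T₃ : ℝ × ℝ,
      GoodConfig a b Δ u₂ u₃ T₂ T₃ →
      ∀ v : ℝ × ℝ, v ≠ 0 →
        ∃! p : ℝ × ℝ, p ∈ contourL a b Δ u₂ u₃ T₂ T₃ ∧ ∃ c : ℝ, 0 < c ∧ p = c • v := by
  refine ⟨1, one_pos, ?_⟩
  intro Δ hΔ u₂ u₃ T₂ T₃ hcfg v hv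
  obtain ⟨⟨hT2e, hT22, n₂, hn₂, hgn₂⟩, ⟨hT3e, hT31, hT32, n₃, hn₃, hgn₃⟩,
    hu₂, hu₃, htan₂, htan₃⟩ := hcfg
  set c₂ : ℝ := (n₂ : ℝ) with hc₂def
  set c₃ : ℝ := (n₃ : ℝ) with hc₃def
  have hc₂ : 0 < c₂ := by rw [hc₂def]; exact_mod_cast hn₂
  have hc₃ : 0 < c₃ := by rw [hc₃def]; exact_mod_cast hn₃
  have hg₂ : gradE a b T₂ = c₂ • ((1, -Δ) : ℝ × ℝ) := by
    rw [hc₂def, Nat.cast_smul_eq_nsmul ℝ]; exact hgn₂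
  have hg₃ : gradE a b T₃ = c₃ • ((-Δ, 1) : ℝ × ℝ) := by
    rw [hc₃def, Nat.cast_smul_eq_nsmul ℝ]; exact hgn₃
  open Stmt2Aux in
  set P₁ : ℝ × ℝ := (0, u₃) with hP₁def
  set P₂ : ℝ × ℝ := (u₂, 0) with hP₂def
  -- component equations of the gradient conditions
  have hg21 : 2 * a * T₂.1 + 2 * b * (T₂.1 - T₂.2) = c₂ * 1 := congrArg Prod.fst hg₂
  have hg22 : -(2 * b * (T₂.1 - T₂.2)) = c₂ * (-Δ) := congrArg Prod.snd hg₂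
  have hg31 : 2 * a * T₃.1 + 2 * b * (T₃.1 - T₃.2) = c₃ * (-Δ) := congrArg Prod.fst hg₃
  have hg32 : -(2 * b * (T₃.1 - T₃.2)) = c₃ * 1 := congrArg Prod.snd hg₃
  have hp2 : 2 * b * (T₂.1 - T₂.2) = c₂ * Δ := by linarith
  have hA : 2 * a * T₂.1 = c₂ - c₂ * Δ := by linarith
  have hq2 : 2 * b * (T₃.1 - T₃.2) = -c₃ := by linarith
  have hC : 2 * a * T₃.1 = c₃ - c₃ * Δ := by linarith
  -- the four determinants
  have h12 : Stmt2Aux.det2 P₁ P₂ < 0 := by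
    show (0:ℝ) * 0 - u₃ * u₂ < 0
    nlinarith [mul_pos hu₃ hu₂]
  have h23 : Stmt2Aux.det2 P₂ T₂ < 0 := by
    show u₂ * T₂.2 - 0 * T₂.1 < 0
    nlinarith [mul_pos hu₂ (neg_pos.2 hT22)]
  have h41 : Stmt2Aux.det2 T₃ P₁ < 0 := by
    show T₃.1 * u₃ - T₃.2 * 0 < 0
    nlinarith [mul_pos (neg_pos.2 hT31) hu₃]
  have hmix : c₂ * T₃.1 = c₃ * T₂.1 := by
    have h2 : 2 * a * (c₂ * T₃.1) = 2 * a * (c₃ * T₂.1) := by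
      linear_combination c₂ * hC - c₃ * hA
    exact mul_left_cancel₀ (by positivity : (2:ℝ) * a ≠ 0) h2
  have hkey : 4 * a * b * (T₂.1 * T₃.2 - T₂.2 * T₃.1) = c₂ * c₃ * (1 - Δ ^ 2) := by
    linear_combination (2 * b * T₃.2) * hA - (2 * b * T₂.2) * hC
      + (c₃ * (1 - Δ)) * hp2 - (c₂ * (1 - Δ)) * hq2 + (2 * b * (1 - Δ)) * hmix
  have h34 : Stmt2Aux.det2 T₂ T₃ < 0 := by
    show T₂.1 * T₃.2 - T₂.2 * T₃.1 < 0
    have hneg : c₂ * c₃ * (1 - Δ ^ 2) < 0 := by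
      have h1 : (1:ℝ) - Δ ^ 2 < 0 := by nlinarith
      exact mul_neg_of_pos_of_neg (mul_pos hc₂ hc₃) h1
    nlinarith [mul_pos ha hb]
  -- arc endpoints
  have hT2arc : T₂ ∈ arcE a b Δ := by
    refine ⟨hT2e, c₂, 0, hc₂.le, le_refl 0, ?_⟩
    rw [hg₂]; simp
  have hT3arc : T₃ ∈ arcE a b Δ := by
    refine ⟨hT3e, 0, c₃, le_refl 0, hc₃.le, ?_⟩
    rw [hg₃]; simp
  -- shared endpoints belong to the pieces
  have hP1S1 : P₁ ∈ segment ℝ P₁ P₂ := left_mem_segment ℝ P₁ P₂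
  have hP2S1 : P₂ ∈ segment ℝ P₁ P₂ := right_mem_segment ℝ P₁ P₂
  have hP2S2 : P₂ ∈ segment ℝ P₂ T₂ := left_mem_segment ℝ P₂ T₂
  have hT2S2 : T₂ ∈ segment ℝ P₂ T₂ := right_mem_segment ℝ P₂ T₂
  have hT3S4 : T₃ ∈ segment ℝ T₃ P₁ := left_mem_segment ℝ T₃ P₁
  have hP1S4 : P₁ ∈ segment ℝ T₃ P₁ := right_mem_segment ℝ T₃ P₁
  -- ray representation of a shared point
  have shared : ∀ (t : ℝ) (w : ℝ × ℝ), 0 < t → v = t • w → w = t⁻¹ • v := by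
    intro t w ht hvw
    rw [hvw, smul_smul, inv_mul_cancel₀ ht.ne', one_smul]
  -- the main uniqueness claim
  have uniq : ∀ p q : ℝ × ℝ,
      (p ∈ contourL a b Δ u₂ u₃ T₂ T₃ ∧ ∃ c : ℝ, 0 < c ∧ p = c • v) →
      (q ∈ contourL a b Δ u₂ u₃ T₂ T₃ ∧ ∃ c : ℝ, 0 < c ∧ q = c • v) → p = q := by
    rintro p q ⟨hpL, cp, hcp, hpe⟩ ⟨hqL, cq, hcq, hqe⟩
    simp only [contourL, Set.mem_union] at hpL hqL
    rcases hpL with ((hp | hp) | hp) | hp <;> rcases hqL with ((hq | hq) | hq) | hq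
    -- (S1, S1)
    · exact seg_ray_unique h12.ne hp hq hcp hcq hpe hqe
    -- (S1, S2) shared P₂
    · obtain ⟨t, ht, hvw⟩ := adjacent h12 h23 (seg_ray_cone hp hcp hpe)
        (seg_ray_cone hq hcq hqe) hv
      have hw := shared t P₂ ht hvw
      rw [seg_ray_unique h12.ne hp hP2S1 hcp (inv_pos.2 ht) hpe hw,
        seg_ray_unique h23.ne hq hP2S2 hcq (inv_pos.2 ht) hqe hw]
    -- (S1, arc) opposite
    · exact absurd (opposite h12 h23 h34 h41 (seg_ray_cone hp hcp hpe)
        (arc_ray_cone ha hb hc₂ hc₃ hg₂ hg₃ hq hcq hqe)) hv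
    -- (S1, S4) shared P₁
    · obtain ⟨t, ht, hvw⟩ := adjacent h41 h12 (seg_ray_cone hq hcq hqe)
        (seg_ray_cone hp hcp hpe) hv
      have hw := shared t P₁ ht hvw
      rw [seg_ray_unique h12.ne hp hP1S1 hcp (inv_pos.2 ht) hpe hw,
        seg_ray_unique h41.ne hq hP1S4 hcq (inv_pos.2 ht) hqe hw]
    -- (S2, S1) shared P₂
    · obtain ⟨t, ht, hvw⟩ := adjacent h12 h23 (seg_ray_cone hq hcq hqe)
        (seg_ray_cone hp hcp hpe) hv
      have hw := shared t P₂ ht hvw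
      rw [seg_ray_unique h23.ne hp hP2S2 hcp (inv_pos.2 ht) hpe hw,
        seg_ray_unique h12.ne hq hP2S1 hcq (inv_pos.2 ht) hqe hw]
    -- (S2, S2)
    · exact seg_ray_unique h23.ne hp hq hcp hcq hpe hqe
    -- (S2, arc) shared T₂
    · obtain ⟨t, ht, hvw⟩ := adjacent h23 h34 (seg_ray_cone hp hcp hpe)
        (arc_ray_cone ha hb hc₂ hc₃ hg₂ hg₃ hq hcq hqe) hv
      have hw := shared t T₂ ht hvw
      rw [seg_ray_unique h23.ne hp hT2S2 hcp (inv_pos.2 ht) hpe hw,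
        arc_ray_unique hq.1 hT2e hcq (inv_pos.2 ht) hqe hw]
    -- (S2, S4) opposite
    · exact absurd (opposite h23 h34 h41 h12 (seg_ray_cone hp hcp hpe)
        (seg_ray_cone hq hcq hqe)) hv
    -- (arc, S1) opposite
    · exact absurd (opposite h12 h23 h34 h41 (seg_ray_cone hq hcq hqe)
        (arc_ray_cone ha hb hc₂ hc₃ hg₂ hg₃ hp hcp hpe)) hv
    -- (arc, S2) shared T₂
    · obtain ⟨t, ht, hvw⟩ := adjacent h23 h34 (seg_ray_cone hq hcq hqe)
        (arc_ray_cone ha hb hc₂ hc₃ hg₂ hg₃ hp hcp hpe) hv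
      have hw := shared t T₂ ht hvw
      rw [arc_ray_unique hp.1 hT2e hcp (inv_pos.2 ht) hpe hw,
        seg_ray_unique h23.ne hq hT2S2 hcq (inv_pos.2 ht) hqe hw]
    -- (arc, arc)
    · exact arc_ray_unique hp.1 hq.1 hcp hcq hpe hqe
    -- (arc, S4) shared T₃
    · obtain ⟨t, ht, hvw⟩ := adjacent h34 h41
        (arc_ray_cone ha hb hc₂ hc₃ hg₂ hg₃ hp hcp hpe)
        (seg_ray_cone hq hcq hqe) hv
      have hw := shared t T₃ ht hvw
      rw [arc_ray_unique hp.1 hT3e hcp (inv_pos.2 ht) hpe hw,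
        seg_ray_unique h41.ne hq hT3S4 hcq (inv_pos.2 ht) hqe hw]
    -- (S4, S1) shared P₁
    · obtain ⟨t, ht, hvw⟩ := adjacent h41 h12 (seg_ray_cone hp hcp hpe)
        (seg_ray_cone hq hcq hqe) hv
      have hw := shared t P₁ ht hvw
      rw [seg_ray_unique h41.ne hp hP1S4 hcp (inv_pos.2 ht) hpe hw,
        seg_ray_unique h12.ne hq hP1S1 hcq (inv_pos.2 ht) hqe hw]
    -- (S4, S2) opposite
    · exact absurd (opposite h23 h34 h41 h12 (seg_ray_cone hq hcq hqe)
        (seg_ray_cone hp hcp hpe)) hv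
    -- (S4, arc) shared T₃
    · obtain ⟨t, ht, hvw⟩ := adjacent h34 h41
        (arc_ray_cone ha hb hc₂ hc₃ hg₂ hg₃ hq hcq hqe)
        (seg_ray_cone hp hcp hpe) hv
      have hw := shared t T₃ ht hvw
      rw [seg_ray_unique h41.ne hp hT3S4 hcp (inv_pos.2 ht) hpe hw,
        arc_ray_unique hq.1 hT3e hcq (inv_pos.2 ht) hqe hw]
    -- (S4, S4)
    · exact seg_ray_unique h41.ne hp hq hcp hcq hpe hqe
  -- existence
  have hcov := Stmt2Aux.covering h12 h23 h34 h41 v hv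
  have hex : ∃ p : ℝ × ℝ, p ∈ contourL a b Δ u₂ u₃ T₂ T₃ ∧ ∃ c : ℝ, 0 < c ∧ p = c • v := by
    rcases hcov with hc | hc | hc | hc
    · obtain ⟨p, hp, c, hc0, hpe⟩ := seg_ray_exists hc hv
      exact ⟨p, Or.inl (Or.inl (Or.inl hp)), c, hc0, hpe⟩
    · obtain ⟨p, hp, c, hc0, hpe⟩ := seg_ray_exists hc hv
      exact ⟨p, Or.inl (Or.inl (Or.inr hp)), c, hc0, hpe⟩
    · obtain ⟨p, hp, c, hc0, hpe⟩ := arc_ray_exists ha hb hc₂ hc₃ hg₂ hg₃ hc hv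
      exact ⟨p, Or.inl (Or.inr hp), c, hc0, hpe⟩
    · obtain ⟨p, hp, c, hc0, hpe⟩ := seg_ray_exists hc hv
      exact ⟨p, Or.inr hp, c, hc0, hpe⟩
  obtain ⟨p, hp⟩ := hex
  exact ⟨p, hp, fun q hq => uniq q p hq hp⟩
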